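/- Let G be a finitely generated group and H a finite-index normal subgroup. If there exists a nonempty minimal strongly aperiodic subshift of finite type over H, then there exists a nonempty minimal strongly aperiodic subshift of finite type over G. -/
import Mathlib


section SymbolicDynamics

variable {G A : Type*} [Group G]

/-- The shift action: `σ^g(x)(h) = x(g⁻¹h)`. -/
def shiftAct (g : G) (x : G → A) : G → A := fun h => x (g⁻¹ * h)

/-- A pattern with finite support `P` appears in `x` if some translate of `x` matches it. -/
def Appears (P : Finset G) (p : G → A) (x : G → A) : Prop :=
  ∃ g : G, ∀ h ∈ P, x (g * h) = p h

/-- A subshift of finite type: the configurations avoiding a finite set of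
forbidden patterns. -/
def IsSFT (X : Set (G → A)) : Prop :=
  ∃ F : Finset (Finset G × (G → A)),
    X = { x | ∀ f ∈ F, ¬ Appears f.1 f.2 x }

/-- Every configuration has trivial stabilizer. -/
def StronglyAperiodic (X : Set (G → A)) : Prop :=
  ∀ x ∈ X, ∀ g : G, shiftAct g x = x → g = 1

/-- Closedness in the prodiscrete topology on `A^G`, stated combinatorially:
any configuration all of whose finite restrictions are matched by elements of `Y`
belongs to `Y`. -/
def IsClosedConfigSet (Y : Set (G → A)) : Prop :=
  ∀ x : G → A, (∀ S : Finset G, ∃ y ∈ Y, ∀ h ∈ S, y h = x h) → x ∈ Y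

/-- Minimality: `X` has no nonempty proper closed shift-invariant subset. -/
def MinimalSubshift (X : Set (G → A)) : Prop :=
  ∀ Y : Set (G → A), Y ⊆ X → IsClosedConfigSet Y →
    (∀ (g : G), ∀ y ∈ Y, shiftAct g y ∈ Y) → Y.Nonempty → Y = X

end SymbolicDynamics

section Generic

variable {G A : Type*} [Group G]

@[simp] lemma shiftAct_one' (x : G → A) : shiftAct (1 : G) x = x := by
  funext h; simp [shiftAct]

lemma appears_shift (P : Finset G) (p : G → A) (g : G) (x : G → A) :
    Appears P p (shiftAct g x) ↔ Appears P p x := by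
  constructor
  · rintro ⟨g', hg'⟩
    exact ⟨g⁻¹ * g', fun h hh => by simpa [shiftAct, mul_assoc] using hg' h hh⟩
  · rintro ⟨g', hg'⟩
    exact ⟨g * g', fun h hh => by simpa [shiftAct, mul_assoc] using hg' h hh⟩

lemma sft_shift_mem {X : Set (G → A)} (hX : IsSFT X) (g : G) {y : G → A} (hy : y ∈ X) :
    shiftAct g y ∈ X := by
  obtain ⟨F, rfl⟩ := hX
  intro f hf
  rw [appears_shift]
  exact hy f hf

lemma sft_closed {X : Set (G → A)} (hX : IsSFT X) : IsClosedConfigSet X := by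
  classical
  obtain ⟨F, rfl⟩ := hX
  intro x hx f hf ⟨g, hg⟩
  obtain ⟨y, hyX, hy⟩ := hx (f.1.image (fun h => g * h))
  refine hyX f hf ⟨g, fun h hh => ?_⟩
  rw [hy (g * h) (Finset.mem_image_of_mem _ hh)]
  exact hg h hh

/-- Density of every orbit in a minimal SFT. -/
lemma density {X : Set (G → A)} (hsft : IsSFT X) (hmin : MinimalSubshift X)
    {x₀ x : G → A} (h₀ : x₀ ∈ X) (hx : x ∈ X) (T : Finset G) :
    ∃ k : G, ∀ h ∈ T, shiftAct k x₀ h = x h := by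
  set Z : Set (G → A) := { z | ∀ S : Finset G, ∃ k : G, ∀ h ∈ S, shiftAct k x₀ h = z h } with hZ
  have hZX : Z ⊆ X := by
    intro z hz
    refine sft_closed hsft z (fun S => ?_)
    obtain ⟨k, hk⟩ := hz S
    exact ⟨shiftAct k x₀, sft_shift_mem hsft k h₀, hk⟩
  have hZclosed : IsClosedConfigSet Z := by
    intro z hz S
    obtain ⟨z', hz', hagree⟩ := hz S
    obtain ⟨k, hk⟩ := hz' S
    exact ⟨k, fun h hh => (hk h hh).trans (hagree h hh)⟩
  have hZinv : ∀ (g : G), ∀ z ∈ Z, shiftAct g z ∈ Z := by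
    classical
    intro g z hz S
    classical
    obtain ⟨k, hk⟩ := hz (S.image (fun h => g⁻¹ * h))
    refine ⟨g * k, fun h hh => ?_⟩
    have := hk (g⁻¹ * h) (Finset.mem_image_of_mem _ hh)
    simpa [shiftAct, mul_assoc] using this
  have hZne : Z.Nonempty := ⟨x₀, fun S => ⟨1, fun h _ => by simp⟩⟩
  have := hmin Z hZX hZclosed hZinv hZne
  have hxZ : x ∈ Z := this ▸ hx
  exact hxZ T

end Generic

section LiftCore

set_option linter.unusedSectionVars false

variable {G : Type*} [Group G] {H : Subgroup G} [H.Normal] {A Q' : Type*}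

/-- A section of the quotient map. -/
noncomputable def qsec (q : G ⧸ H) : G := q.out

@[simp] lemma qsec_spec (q : G ⧸ H) : ((qsec q : G) : G ⧸ H) = q := QuotientGroup.out_eq' q

lemma mem_of_mk_eq_one {g : G} (h : (g : G ⧸ H) = 1) : g ∈ H := (QuotientGroup.eq_one_iff g).mp h

@[simp] lemma coe_mem_mk (h : H) : ((h : G) : G ⧸ H) = 1 := (QuotientGroup.eq_one_iff _).mpr h.2

/-- The sampling map `ρ_q : G → H`. -/
noncomputable def rho (q : G ⧸ H) (g : G) : H :=
  ⟨(qsec q)⁻¹ * g * qsec ((g : G ⧸ H)⁻¹ * q), by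
    apply mem_of_mk_eq_one
    simp only [QuotientGroup.mk_mul, QuotientGroup.mk_inv, qsec_spec]
    group⟩

lemma rho_coe (q : G ⧸ H) (g : G) :
    (rho q g : G) = (qsec q)⁻¹ * g * qsec ((g : G ⧸ H)⁻¹ * q) := rfl

lemma rho_coe' (q : G ⧸ H) {g : G} {β : G ⧸ H} (hβ : (g : G ⧸ H)⁻¹ * q = β) :
    (rho q g : G) = (qsec q)⁻¹ * g * qsec β := by rw [rho_coe, hβ]

/-- The configuration over `G` attached to a phase `q` and a configuration `x` over `H`. -/
noncomputable def yconf (e : (G ⧸ H) ≃ Q') (q : G ⧸ H) (x : H → A) : G → A × Q' :=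
  fun g => (x (rho q g), e ((g : G ⧸ H)⁻¹ * q))

/-- The `H`-translation cocycle. -/
noncomputable def kk (g₀ : G) (q : G ⧸ H) : H :=
  ⟨(qsec ((g₀ : G ⧸ H) * q))⁻¹ * g₀ * qsec q, by
    apply mem_of_mk_eq_one
    simp only [QuotientGroup.mk_mul, QuotientGroup.mk_inv, qsec_spec]
    group⟩

lemma kk_coe (g₀ : G) (q : G ⧸ H) :
    (kk g₀ q : G) = (qsec ((g₀ : G ⧸ H) * q))⁻¹ * g₀ * qsec q := rfl

/-- Equivariance of `yconf`. -/
lemma shift_yconf (e : (G ⧸ H) ≃ Q') (g₀ : G) (q : G ⧸ H) (x : H → A) :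
    shiftAct g₀ (yconf e q x) = yconf e ((g₀ : G ⧸ H) * q) (shiftAct (kk g₀ q) x) := by
  funext g
  have harg : ((g₀⁻¹ * g : G) : G ⧸ H)⁻¹ * q = (g : G ⧸ H)⁻¹ * ((g₀ : G ⧸ H) * q) := by
    simp only [QuotientGroup.mk_mul, QuotientGroup.mk_inv]
    group
  show (x (rho q (g₀⁻¹ * g)), e (((g₀⁻¹ * g : G) : G ⧸ H)⁻¹ * q))
      = ((shiftAct (kk g₀ q) x) (rho ((g₀ : G ⧸ H) * q) g), e ((g : G ⧸ H)⁻¹ * ((g₀ : G ⧸ H) * q)))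
  refine Prod.ext ?_ (by rw [harg])
  show x (rho q (g₀⁻¹ * g)) = x ((kk g₀ q)⁻¹ * rho ((g₀ : G ⧸ H) * q) g)
  congr 1
  apply Subtype.ext
  push_cast [rho_coe, kk_coe]
  rw [harg]
  group

@[simp] lemma rho_home (q : G ⧸ H) (h : H) :
    rho q (qsec q * (h : G) * (qsec (1 : G ⧸ H))⁻¹) = h := by
  apply Subtype.ext
  rw [rho_coe' q (β := 1) (by
    simp only [QuotientGroup.mk_mul, QuotientGroup.mk_inv, qsec_spec, coe_mem_mk]
    group)]
  group

lemma rho_c2 (q : G ⧸ H) (g : G) :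
    rho q (g * (qsec ((g : G ⧸ H)⁻¹ * q) * (qsec (1 : G ⧸ H))⁻¹)) = rho q g := by
  apply Subtype.ext
  rw [rho_coe' q (β := 1) (by
    simp only [QuotientGroup.mk_mul, QuotientGroup.mk_inv, qsec_spec]
    group), rho_coe]
  group

lemma rho_c3 (q : G ⧸ H) (g₀ : G) (hg₀ : (g₀ : G ⧸ H) = q) (h k : H)
    (hk : (k : G) = (qsec q)⁻¹ * g₀ * qsec (1 : G ⧸ H)) :
    rho q (g₀ * (qsec (1 : G ⧸ H) * (h : G) * (qsec (1 : G ⧸ H))⁻¹)) = k * h := by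
  apply Subtype.ext
  rw [rho_coe' q (β := 1) (by
    simp only [QuotientGroup.mk_mul, QuotientGroup.mk_inv, qsec_spec, coe_mem_mk, hg₀]
    group)]
  push_cast [hk]
  group

lemma yconf_inj (e : (G ⧸ H) ≃ Q') (q₁ q₂ : G ⧸ H) (x₁ x₂ : H → A)
    (hy : yconf e q₁ x₁ = yconf e q₂ x₂) : q₁ = q₂ ∧ x₁ = x₂ := by
  have hq : q₁ = q₂ := by
    have := congrFun hy 1
    have h2 := congrArg Prod.snd this
    simp only [yconf] at h2
    have := e.injective h2
    simpa using this
  subst hq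
  refine ⟨rfl, funext fun h => ?_⟩
  have := congrArg Prod.fst (congrFun hy (qsec q₁ * (h : G) * (qsec (1 : G ⧸ H))⁻¹))
  simpa only [yconf, rho_home] using this

end LiftCore

section SFTConstruction

set_option linter.unusedSectionVars false

variable {G : Type*} [Group G] {H : Subgroup G} [H.Normal] [Finite (G ⧸ H)]
  {A Q' : Type*} [Finite A] [Finite Q']

/-- The window of the SFT. -/
def Wset (S : Finset G) (F : Finset (Finset H × (H → A))) : Set G :=
  {1} ∪ (S : Set G) ∪ (Set.range fun α : G ⧸ H => qsec α * (qsec (1 : G ⧸ H))⁻¹)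
    ∪ (⋃ f ∈ (F : Set (Finset H × (H → A))),
        (fun h : H => qsec (1 : G ⧸ H) * (h : G) * (qsec (1 : G ⧸ H))⁻¹) '' (f.1 : Set H))

lemma Wset_finite (S : Finset G) (F : Finset (Finset H × (H → A))) : (Wset S F).Finite := by
  refine (((Set.finite_singleton 1).union S.finite_toSet).union
      (Set.finite_range _)).union ?_
  exact Set.Finite.biUnion F.finite_toSet (fun f _ => (f.1.finite_toSet).image _)

noncomputable def Wfin (S : Finset G) (F : Finset (Finset H × (H → A))) : Finset G :=
  (Wset_finite S F).toFinset

lemma one_mem_W (S : Finset G) (F : Finset (Finset H × (H → A))) : (1 : G) ∈ Wfin S F := by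
  simp only [Wfin, Set.Finite.mem_toFinset, Wset, Set.mem_union]
  exact Or.inl (Or.inl (Or.inl rfl))

lemma sub_mem_W {S : Finset G} (F : Finset (Finset H × (H → A))) {σ : G} (hσ : σ ∈ S) :
    σ ∈ Wfin S F := by
  simp only [Wfin, Set.Finite.mem_toFinset, Wset, Set.mem_union]
  exact Or.inl (Or.inl (Or.inr hσ))

lemma range_mem_W (S : Finset G) (F : Finset (Finset H × (H → A))) (α : G ⧸ H) :
    qsec α * (qsec (1 : G ⧸ H))⁻¹ ∈ Wfin S F := by
  simp only [Wfin, Set.Finite.mem_toFinset, Wset, Set.mem_union]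
  exact Or.inl (Or.inr ⟨α, rfl⟩)

lemma conj_mem_W (S : Finset G) {F : Finset (Finset H × (H → A))}
    {f : Finset H × (H → A)} (hf : f ∈ F) {h : H} (hh : h ∈ f.1) :
    qsec (1 : G ⧸ H) * (h : G) * (qsec (1 : G ⧸ H))⁻¹ ∈ Wfin S F := by
  simp only [Wfin, Set.Finite.mem_toFinset, Wset, Set.mem_union]
  refine Or.inr ?_
  exact Set.mem_biUnion hf ⟨h, hh, rfl⟩

/-- The "locally bad" predicate on patterns. -/
def BadPat (e : (G ⧸ H) ≃ Q') (S : Finset G) (F : Finset (Finset H × (H → A)))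
    (p : G → A × Q') : Prop :=
  (∃ σ ∈ S, (p σ).2 ≠ e ((σ : G ⧸ H)⁻¹ * e.symm ((p 1).2)))
  ∨ ((p (qsec (e.symm ((p 1).2)) * (qsec (1 : G ⧸ H))⁻¹)).1 ≠ (p 1).1)
  ∨ (∃ f ∈ F, e.symm ((p 1).2) = 1 ∧
      ∀ h ∈ f.1, (p (qsec (1 : G ⧸ H) * (h : G) * (qsec (1 : G ⧸ H))⁻¹)).1 = f.2 h)

lemma BadPat_congr (e : (G ⧸ H) ≃ Q') (S : Finset G) (F : Finset (Finset H × (H → A)))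
    {p p' : G → A × Q'} (hagree : ∀ w ∈ Wfin S F, p w = p' w) :
    BadPat e S F p → BadPat e S F p' := by
  have h1 : p 1 = p' 1 := hagree 1 (one_mem_W S F)
  rintro (⟨σ, hσ, hbad⟩ | hbad | ⟨f, hf, h1', hbad⟩)
  · exact Or.inl ⟨σ, hσ, by rw [← hagree σ (sub_mem_W F hσ), ← h1]; exact hbad⟩
  · refine Or.inr (Or.inl ?_)
    rw [← h1, ← hagree _ (range_mem_W S F (e.symm ((p 1).2)))]
    exact hbad
  · refine Or.inr (Or.inr ⟨f, hf, by rw [← h1]; exact h1', fun h hh => ?_⟩)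
    rw [← hagree _ (conj_mem_W S hf hh)]
    exact hbad h hh

open Classical in
/-- Extension of a pattern beyond the window by a default symbol. -/
noncomputable def extW (S : Finset G) (F : Finset (Finset H × (H → A)))
    (e : (G ⧸ H) ≃ Q') (a₀ : A) (u : G → A × Q') : G → A × Q' :=
  fun g => if g ∈ Wfin S F then u g else (a₀, e 1)

lemma extW_eq_on {S : Finset G} {F : Finset (Finset H × (H → A))}
    (e : (G ⧸ H) ≃ Q') (a₀ : A) (u : G → A × Q') {g : G} (hg : g ∈ Wfin S F) :
    extW S F e a₀ u g = u g := by
  simp [extW, hg]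

/-- The finite set of forbidden patterns. -/
noncomputable def badFinset (e : (G ⧸ H) ≃ Q') (S : Finset G)
    (F : Finset (Finset H × (H → A))) (a₀ : A) : Finset (Finset G × (G → A × Q')) := by
  classical
  have hfin : Set.Finite { p : G → A × Q' |
      (∃ u : G → A × Q', p = extW S F e a₀ u) ∧ BadPat e S F p } := by
    have : { p : G → A × Q' | (∃ u, p = extW S F e a₀ u) ∧ BadPat e S F p } ⊆
        Set.range (fun w : {g : G // g ∈ Wfin S F} → A × Q' =>
          extW S F e a₀ (fun g' => if hg' : g' ∈ Wfin S F then w ⟨g', hg'⟩ else (a₀, e 1))) := by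
      rintro p ⟨⟨u, rfl⟩, -⟩
      refine ⟨fun gw => u gw.1, ?_⟩
      funext g
      by_cases hg : g ∈ Wfin S F <;> simp [extW, hg]
    exact Set.Finite.subset (Set.finite_range _) this
  exact (hfin.image (fun p => (Wfin S F, p))).toFinset

lemma mem_badFinset {e : (G ⧸ H) ≃ Q'} {S : Finset G}
    {F : Finset (Finset H × (H → A))} {a₀ : A} {fp : Finset G × (G → A × Q')} :
    fp ∈ badFinset e S F a₀ ↔
      ∃ p : G → A × Q', ((∃ u, p = extW S F e a₀ u) ∧ BadPat e S F p) ∧ (Wfin S F, p) = fp := by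
  classical
  simp [badFinset, Set.Finite.mem_toFinset]

/-- The bridge: avoiding the forbidden patterns is equivalent to satisfying the local rules
everywhere. -/
lemma sft_main (e : (G ⧸ H) ≃ Q') (S : Finset G) (F : Finset (Finset H × (H → A)))
    (a₀ : A) (y : G → A × Q') :
    (∀ fp ∈ badFinset e S F a₀, ¬ Appears fp.1 fp.2 y) ↔
      ∀ g : G, ¬ BadPat e S F (fun w => y (g * w)) := by
  constructor
  · intro hy g hbad
    refine hy (Wfin S F, extW S F e a₀ (fun w => y (g * w))) ?_ ?_
    · rw [mem_badFinset]
      refine ⟨_, ⟨⟨_, rfl⟩, ?_⟩, rfl⟩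
      exact BadPat_congr e S F (fun w hw => (extW_eq_on e a₀ _ hw).symm) hbad
    · refine ⟨g, fun w hw => ?_⟩
      show y (g * w) = extW S F e a₀ (fun w => y (g * w)) w
      rw [extW_eq_on e a₀ _ hw]
  · rintro hy fp hfp ⟨g, hg⟩
    rw [mem_badFinset] at hfp
    obtain ⟨p, ⟨-, hbad⟩, rfl⟩ := hfp
    refine hy g (BadPat_congr e S F (fun w hw => (hg w hw).symm) hbad)

end SFTConstruction

section Characterization

set_option linter.unusedSectionVars false

variable {G : Type*} [Group G] {H : Subgroup G} [H.Normal] [Finite (G ⧸ H)]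
  {A Q' : Type*} [Finite A] [Finite Q']

lemma yconf_not_bad (e : (G ⧸ H) ≃ Q') (S : Finset G) (F : Finset (Finset H × (H → A)))
    {x : H → A} (hx : ∀ f ∈ F, ¬ Appears f.1 f.2 x) (q : G ⧸ H) :
    ∀ g : G, ¬ BadPat e S F (fun w => yconf e q x (g * w)) := by
  intro g hbad
  have h2 : ∀ g' : G, e.symm ((yconf e q x g').2) = (g' : G ⧸ H)⁻¹ * q := by
    intro g'; simp [yconf]
  rcases hbad with (⟨σ, hσ, hbad⟩ | hbad | ⟨f, hf, h1, hmatch⟩)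
  · apply hbad
    show e (((g * σ : G) : G ⧸ H)⁻¹ * q)
        = e ((σ : G ⧸ H)⁻¹ * e.symm ((yconf e q x (g * 1)).2))
    rw [h2, mul_one]
    congr 1
    simp only [QuotientGroup.mk_mul, QuotientGroup.mk_inv]
    group
  · apply hbad
    show (yconf e q x (g * (qsec (e.symm ((yconf e q x (g * 1)).2)) * (qsec (1 : G ⧸ H))⁻¹))).1
        = (yconf e q x (g * 1)).1
    rw [h2, mul_one]
    show x (rho q (g * (qsec ((g : G ⧸ H)⁻¹ * q) * (qsec (1 : G ⧸ H))⁻¹))) = x (rho q g)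
    rw [rho_c2]
  · have h1' : ((g * 1 : G) : G ⧸ H) = q := by
      rw [h2] at h1
      rwa [inv_mul_eq_one] at h1
    rw [mul_one] at h1'
    set k : H := ⟨(qsec q)⁻¹ * g * qsec (1 : G ⧸ H), by
      apply mem_of_mk_eq_one
      simp only [QuotientGroup.mk_mul, QuotientGroup.mk_inv, qsec_spec, h1']
      group⟩ with hk
    refine hx f hf ⟨k, fun h hh => ?_⟩
    have := hmatch h hh
    show x (k * h) = f.2 h
    rw [← rho_c3 q g h1' h k rfl]
    exact this

lemma not_bad_yconf (e : (G ⧸ H) ≃ Q') (S : Finset G)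
    (hSgen : Subgroup.closure (S : Set G) = ⊤) (F : Finset (Finset H × (H → A)))
    {y : G → A × Q'} (hy : ∀ g : G, ¬ BadPat e S F (fun w => y (g * w))) :
    ∃ (q : G ⧸ H) (x : H → A), (∀ f ∈ F, ¬ Appears f.1 f.2 x) ∧ y = yconf e q x := by
  have rule1 : ∀ g : G, ∀ σ ∈ S, (y (g * σ)).2 = e ((σ : G ⧸ H)⁻¹ * e.symm ((y g).2)) := by
    intro g σ hσ
    by_contra hne
    exact hy g (Or.inl ⟨σ, hσ, by simpa using hne⟩)
  have rule2 : ∀ g : G,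
      (y (g * (qsec (e.symm ((y g).2)) * (qsec (1 : G ⧸ H))⁻¹))).1 = (y g).1 := by
    intro g
    by_contra hne
    exact hy g (Or.inr (Or.inl (by simpa using hne)))
  have rule3 : ∀ (g : G) (f : Finset H × (H → A)), f ∈ F → e.symm ((y g).2) = 1 →
      ∃ h ∈ f.1, (y (g * (qsec (1 : G ⧸ H) * (h : H) * (qsec (1 : G ⧸ H))⁻¹))).1 ≠ f.2 h := by
    intro g f hf h1
    by_contra hne
    push_neg at hne
    exact hy g (Or.inr (Or.inr ⟨f, hf, by simpa using h1,
      fun h hh => by simpa using hne h hh⟩))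
  set q : G ⧸ H := e.symm ((y 1).2) with hq
  have key : ∀ t : G, ∀ g : G, (y (g * t)).2 = e ((t : G ⧸ H)⁻¹ * e.symm ((y g).2)) := by
    intro t
    have ht : t ∈ Subgroup.closure (S : Set G) := by rw [hSgen]; trivial
    refine Subgroup.closure_induction (fun σ hσ g => rule1 g σ hσ) (fun g => by simp) ?_ ?_ ht
    · intro a b _ _ hpa hpb g
      have hab : g * (a * b) = (g * a) * b := by rw [mul_assoc]
      rw [hab, hpb (g * a), hpa g]
      simp only [Equiv.symm_apply_apply, QuotientGroup.mk_mul, mul_inv_rev, mul_assoc]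
    · intro a _ hpa g
      have h' := hpa (g * a⁻¹)
      rw [inv_mul_cancel_right] at h'
      rw [h']
      simp [mul_inv_cancel_left]
  have hc : ∀ g : G, (y g).2 = e ((g : G ⧸ H)⁻¹ * q) := by
    intro g
    have := key g 1
    simpa [hq] using this
  have hc' : ∀ g : G, e.symm ((y g).2) = (g : G ⧸ H)⁻¹ * q := by
    intro g; rw [hc g]; simp
  set x : H → A := fun h => (y (qsec q * (h : G) * (qsec (1 : G ⧸ H))⁻¹)).1 with hxdef
  have hb : ∀ g : G, (y g).1 = x (rho q g) := by
    intro g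
    show (y g).1 = (y (qsec q * ((rho q g : H) : G) * (qsec (1 : G ⧸ H))⁻¹)).1
    rw [rho_coe]
    have hsite : qsec q * ((qsec q)⁻¹ * g * qsec ((g : G ⧸ H)⁻¹ * q)) * (qsec (1 : G ⧸ H))⁻¹
        = g * (qsec ((g : G ⧸ H)⁻¹ * q) * (qsec (1 : G ⧸ H))⁻¹) := by group
    rw [hsite]
    have := rule2 g
    rw [hc'] at this
    exact this.symm
  have hxmem : ∀ f ∈ F, ¬ Appears f.1 f.2 x := by
    rintro f hf ⟨k, hk⟩
    have hg₀ : ((qsec q * (k : G) * (qsec (1 : G ⧸ H))⁻¹ : G) : G ⧸ H) = q := by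
      simp
    have h1 : e.symm ((y (qsec q * (k : G) * (qsec (1 : G ⧸ H))⁻¹)).2) = 1 := by
      rw [hc', hg₀]
      group
    obtain ⟨h, hh, hne⟩ := rule3 _ f hf h1
    apply hne
    have hsite : qsec q * (k : G) * (qsec (1 : G ⧸ H))⁻¹
          * (qsec (1 : G ⧸ H) * (h : G) * (qsec (1 : G ⧸ H))⁻¹)
        = qsec q * ((k * h : H) : G) * (qsec (1 : G ⧸ H))⁻¹ := by
      push_cast
      group
    rw [hsite]
    exact hk h hh
  refine ⟨q, x, hxmem, funext fun g => Prod.ext (hb g) (hc g)⟩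

end Characterization


theorem lift_minimal_strongly_aperiodic_SFT
    (G : Type*) [Group G] (hfg : Group.FG G)
    (H : Subgroup G) [H.Normal] [H.FiniteIndex]
    (hH : ∃ (A : Type) (_ : Finite A) (X : Set (↥H → A)),
      IsSFT X ∧ X.Nonempty ∧ StronglyAperiodic X ∧ MinimalSubshift X) :
    ∃ (A : Type) (_ : Finite A) (X : Set (G → A)),
      IsSFT X ∧ X.Nonempty ∧ StronglyAperiodic X ∧ MinimalSubshift X := by
  classical
  obtain ⟨A, hA, X, hsft, ⟨x₀, hx₀⟩, hap, hmin⟩ := hH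
  haveI := hA
  obtain ⟨F, hXF⟩ := hsft
  obtain ⟨n, ⟨e⟩⟩ := Finite.exists_equiv_fin (G ⧸ H)
  obtain ⟨S0, hS0gen, hS0fin⟩ := Group.fg_iff.mp hfg
  set S : Finset G := hS0fin.toFinset with hSdef
  have hSgen : Subgroup.closure (S : Set G) = ⊤ := by
    rw [hSdef, Set.Finite.coe_toFinset]
    exact hS0gen
  have a₀ : A := x₀ 1
  have hmemX : ∀ x : ↥H → A, x ∈ X ↔ ∀ f ∈ F, ¬ Appears f.1 f.2 x := by
    intro x; rw [hXF]; rfl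
  refine ⟨A × Fin n, inferInstance,
    { y | ∀ g : G, ¬ BadPat e S F (fun w => y (g * w)) }, ?_, ?_, ?_, ?_⟩
  · -- IsSFT
    refine ⟨badFinset e S F a₀, ?_⟩
    ext y
    simp only [Set.mem_setOf_eq]
    exact (sft_main e S F a₀ y).symm
  · -- Nonempty
    exact ⟨yconf e 1 x₀, yconf_not_bad e S F ((hmemX x₀).mp hx₀) 1⟩
  · -- StronglyAperiodic
    intro y hy g₀ hshift
    obtain ⟨q, x, hxF, rfl⟩ := not_bad_yconf e S hSgen F hy
    have hx : x ∈ X := (hmemX x).mpr hxF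
    rw [shift_yconf] at hshift
    obtain ⟨hq, hxx⟩ := yconf_inj e _ q _ x hshift
    have hk1 : kk g₀ q = 1 := hap x hx _ hxx
    have hco := congrArg (Subtype.val) hk1
    rw [kk_coe, hq] at hco
    have h' : (qsec q)⁻¹ * g₀ * qsec q = 1 := by simpa using hco
    calc g₀ = qsec q * ((qsec q)⁻¹ * g₀ * qsec q) * (qsec q)⁻¹ := by group
    _ = 1 := by rw [h']; group
  · -- MinimalSubshift
    rintro Y hYsub hYclosed hYinv ⟨y₀, hy₀⟩
    obtain ⟨q₀, x₀', hx₀F, hy₀eq⟩ := not_bad_yconf e S hSgen F (hYsub hy₀)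
    apply Set.Subset.antisymm hYsub
    intro y hy
    obtain ⟨q, x, hxF, hyeq⟩ := not_bad_yconf e S hSgen F hy
    apply hYclosed
    intro Sfin
    set T : Finset ↥H := Sfin.image (fun g => rho q g) with hTdef
    obtain ⟨k, hk⟩ := density ⟨F, hXF⟩ hmin ((hmemX x₀').mpr hx₀F) ((hmemX x).mpr hxF) T
    set g₁ : G := qsec q * (k : G) * (qsec q₀)⁻¹ with hg₁def
    have hq1 : (g₁ : G ⧸ H) * q₀ = q := by
      rw [hg₁def]
      simp only [QuotientGroup.mk_mul, QuotientGroup.mk_inv, qsec_spec, coe_mem_mk,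
        mul_one, inv_mul_cancel_right]
    have hkk : kk g₁ q₀ = k := by
      apply Subtype.ext
      rw [kk_coe, hq1, hg₁def]
      group
    refine ⟨shiftAct g₁ y₀, hYinv g₁ y₀ hy₀, fun g hg => ?_⟩
    rw [hy₀eq, shift_yconf, hq1, hkk, hyeq]
    exact Prod.ext (hk (rho q g) (Finset.mem_image_of_mem _ hg)) rfl
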